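/- Let H be a real separable Hilbert space with Hilbert basis (e_n)_{n∈ℕ}, let μ be a finite Borel measure on H with finite second moment, let T : H → H be a continuous linear operator, let d ∈ ℕ and let θ = (θ_{ij}) be a real d × d matrix. Then ∫_H ‖ E_{H,d}( θ · P_{H,d}(f) ) − (E_{H,d} ∘ P_{H,d} ∘ T ∘ E_{H,d} ∘ P_{H,d})(f) ‖² dμ(f) ≤ ( ∫_H ‖f‖² dμ(f) ) · ∑_{i=1}^{d} ∑_{j=1}^{d} ( θ_{ij} − ⟨T e_j, e_i⟩ )², where θ · x denotes the matrix–vector product and in particular (P_{H,d} ∘ T ∘ E_{H,d})(x) equals the matrix with entries ⟨T e_j, e_i⟩ applied to x ∈ ℝ^d. -/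

import Mathlib

open MeasureTheory
open scoped RealInnerProductSpace

/-- The projection map `P_{H,d} : H → ℝ^d`, `x ↦ (⟪x,e₁⟫, …, ⟪x,e_d⟫)`,
associated with a Hilbert basis `e` of `H`. -/
noncomputable def projMap {H : Type*} [NormedAddCommGroup H] [InnerProductSpace ℝ H]
    (e : HilbertBasis ℕ ℝ H) (d : ℕ) (x : H) : EuclideanSpace ℝ (Fin d) :=
  WithLp.toLp 2 (fun i : Fin d => ⟪x, e i⟫)

/-- The extension map `E_{H,d} : ℝ^d → H`, `a ↦ ∑_{i=1}^d aᵢ eᵢ`,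
associated with a Hilbert basis `e` of `H`. -/
noncomputable def extMap {H : Type*} [NormedAddCommGroup H] [InnerProductSpace ℝ H]
    (e : HilbertBasis ℕ ℝ H) (d : ℕ) (a : EuclideanSpace ℝ (Fin d)) : H :=
  ∑ i : Fin d, a i • e i

/-- the `L²(μ)` distance between the DeepONet with linear core
`x ↦ θ·x` and the finite-dimensional compression of a continuous linear
operator `T` is controlled by the entrywise distance of `θ` to the matrix
`(⟪T e_j, e_i⟫)_{ij}` of `T`. -/
theorem stmt_9 (H : Type*) [NormedAddCommGroup H] [InnerProductSpace ℝ H]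
    [MeasurableSpace H] [BorelSpace H]
    (e : HilbertBasis ℕ ℝ H)
    (μ : Measure H) [IsFiniteMeasure μ]
    (hμ : Integrable (fun x : H => ‖x‖ ^ 2) μ)
    (T : H →L[ℝ] H) (d : ℕ) (θ : Matrix (Fin d) (Fin d) ℝ) :
    ∫ f : H,
        ‖extMap e d (WithLp.toLp 2 (θ.mulVec (projMap e d f)))
          - extMap e d (projMap e d (T (extMap e d (projMap e d f))))‖ ^ 2 ∂μ
      ≤ (∫ f : H, ‖f‖ ^ 2 ∂μ) *
        ∑ i : Fin d, ∑ j : Fin d, (θ i j - ⟪T (e j), e i⟫) ^ 2 := by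

  classical
  set C : ℝ := ∑ i : Fin d, ∑ j : Fin d, (θ i j - ⟪T (e j), e i⟫) ^ 2 with hC
  have hC0 : 0 ≤ C := Finset.sum_nonneg fun i _ =>
    Finset.sum_nonneg fun j _ => sq_nonneg _
  have horm : Orthonormal ℝ (fun i : Fin d => e (i : ℕ)) :=
    e.orthonormal.comp _ Fin.val_injective
  have hnorm : ∀ a : EuclideanSpace ℝ (Fin d),
      ‖extMap e d a‖ ^ 2 = ∑ i : Fin d, a i ^ 2 := by
    intro a
    rw [extMap, ← real_inner_self_eq_norm_sq, sum_inner]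
    simp [real_inner_smul_left, horm.inner_right_fintype, sq]
  have hpt : ∀ f : H,
      ‖extMap e d (WithLp.toLp 2 (θ.mulVec (projMap e d f)))
        - extMap e d (projMap e d (T (extMap e d (projMap e d f))))‖ ^ 2
      ≤ C * ‖f‖ ^ 2 := by
    intro f
    set p : EuclideanSpace ℝ (Fin d) := projMap e d f with hp
    have hproj : projMap e d (T (extMap e d p))
        = WithLp.toLp 2 (fun i : Fin d => ∑ j : Fin d, ⟪T (e j), e i⟫ * p j) := by
      ext i
      simp only [PiLp.toLp_apply, projMap, extMap, map_sum, _root_.map_smul, sum_inner,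
        real_inner_smul_left, smul_eq_mul]
      exact Finset.sum_congr rfl fun j _ => mul_comm _ _
    have hdiff : extMap e d (WithLp.toLp 2 (θ.mulVec p)) - extMap e d (projMap e d (T (extMap e d p)))
        = extMap e d (WithLp.toLp 2 (fun i : Fin d => ∑ j : Fin d, (θ i j - ⟪T (e j), e i⟫) * p j)) := by
      rw [hproj]
      simp only [extMap]
      rw [← Finset.sum_sub_distrib]
      refine Finset.sum_congr rfl fun i _ => ?_
      rw [← sub_smul]
      congr 1
      show θ.mulVec p i - _ = _
      simp [Matrix.mulVec, dotProduct, sub_mul, Finset.sum_sub_distrib]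
    rw [hdiff, hnorm]
    have hCS : ∀ i : Fin d, (∑ j : Fin d, (θ i j - ⟪T (e j), e i⟫) * p j) ^ 2
        ≤ (∑ j : Fin d, (θ i j - ⟪T (e j), e i⟫) ^ 2) * ∑ j : Fin d, p j ^ 2 :=
      fun i => Finset.sum_mul_sq_le_sq_mul_sq _ _ _
    have hbessel : ∑ j : Fin d, p j ^ 2 ≤ ‖f‖ ^ 2 := by
      have h := horm.sum_inner_products_le (s := Finset.univ) f
      simpa [hp, projMap, real_inner_comm, Real.norm_eq_abs, sq_abs] using h
    calc ∑ i : Fin d, (∑ j : Fin d, (θ i j - ⟪T (e j), e i⟫) * p j) ^ 2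
        ≤ ∑ i : Fin d, (∑ j : Fin d, (θ i j - ⟪T (e j), e i⟫) ^ 2) * ∑ j : Fin d, p j ^ 2 :=
          Finset.sum_le_sum fun i _ => hCS i
      _ = C * ∑ j : Fin d, p j ^ 2 := by rw [hC, Finset.sum_mul]
      _ ≤ C * ‖f‖ ^ 2 := mul_le_mul_of_nonneg_left hbessel hC0
  calc ∫ f : H,
        ‖extMap e d (WithLp.toLp 2 (θ.mulVec (projMap e d f)))
          - extMap e d (projMap e d (T (extMap e d (projMap e d f))))‖ ^ 2 ∂μ
      ≤ ∫ f : H, C * ‖f‖ ^ 2 ∂μ :=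
        integral_mono_of_nonneg (ae_of_all _ fun f => sq_nonneg _)
          (hμ.const_mul C) (ae_of_all _ hpt)
    _ = (∫ f : H, ‖f‖ ^ 2 ∂μ) * C := by rw [integral_const_mul, mul_comm]
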